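/- Define weight operators h_{k,l} := −(1/l)·v^{kk}(l,−l) for 1 ≤ k ≤ d and l < 0. Then in L_r, [h_{k,l}, v^{ij}(m,n)]_r = (δ_{(k,l),(i,m)} + δ_{(k,l),(j,n)} − δ_{(k,−l),(i,m)} − δ_{(k,−l),(j,n)})·v^{ij}(m,n) for all 1 ≤ i,j ≤ d and m,n ∈ ℤ. -/

import Mathlib

/-- The underlying vector space of the Lie algebra `L_r`: formal `ℂ`-linear combinations
of quadratic symbols `v^{ij}(m,n)` (indexed by `(i, j, m, n)`; only the "normally ordered"
indices with `i < j`, or `i = j` and `m ≤ n`, are used, forming the basis `𝓑`), together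
with a scalar component recording the summand `ℂ` of `L = Span 𝓑 ⊕ ℂ`. -/
abbrev LSp (d : ℕ) : Type := ((Fin d × Fin d × ℤ × ℤ) →₀ ℂ) × ℂ

/-- The contraction scalar `[v^j(n), v^l(t)] = δ_{j,l} δ_{n+t,0} n` of the Heisenberg
algebra (with `c = 1`). -/
def kapC {d : ℕ} (j l : Fin d) (n t : ℤ) : ℂ :=
  if j = l ∧ n + t = 0 then (n : ℂ) else 0

/-- The element `v^{ij}(m,n)` of `L`, written in terms of the basis `𝓑 ∪ {1}`: one has
`v^{ij}(m,n) = v^{ji}(n,m)` unless `i = j` and `m = −n`, and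
`v^{ii}(m,−m) = v^{ii}(−m,m) + m`. -/
noncomputable def nrm {d : ℕ} (i j : Fin d) (m n : ℤ) : LSp d :=
  if i = j ∧ n < m then (Finsupp.single (i, j, n, m) 1, if m + n = 0 then (m : ℂ) else 0)
  else if j < i then (Finsupp.single (j, i, n, m) 1, 0)
  else (Finsupp.single (i, j, m, n) 1, 0)

/-- The `r`-modified bracket `[·,·]_r = π₁([·,·]) + r·π₂([·,·])` on basis elements of `𝓑`:
the commutator `[v^{ij}(m,n), v^{kl}(s,t)]` in `U(ĥ)/⟨c−1⟩` is computed by the Wick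
formula `[ab,cd] = [b,d]ac + [b,c]ad + [a,d]cb + [a,c]db`, and then the scalar (`π₂`)
component is multiplied by `r`. -/
noncomputable def wick {d : ℕ} (r : ℂ) (a b : Fin d × Fin d × ℤ × ℤ) : LSp d :=
  match a, b with
  | (i, j, m, n), (k, l, s, t) =>
    let u : LSp d := kapC j l n t • nrm i k m s + kapC j k n s • nrm i l m t
      + kapC i l m t • nrm k j s n + kapC i k m s • nrm l j t n
    (u.1, r * u.2)

/-- The bilinear extension of the `r`-modified bracket `[·,·]_r` to `L_r`
(the scalar summand `ℂ ⊆ L_r` is central). -/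
noncomputable def brk {d : ℕ} (r : ℂ) (x y : LSp d) : LSp d :=
  x.1.sum fun a ca => y.1.sum fun b cb => (ca * cb) • wick r a b

lemma nrm_id {d : ℕ} (i' j' : Fin d) (m' n' : ℤ)
    (hb : i' < j' ∨ (i' = j' ∧ m' ≤ n')) :
    nrm i' j' m' n' = ((Finsupp.single (i', j', m', n') 1, 0) : LSp d) := by
  rcases hb with h | ⟨rfl, h⟩
  · rw [nrm, if_neg (by simp [h.ne]), if_neg (by simp [h.asymm])]
  · rw [nrm, if_neg (by simp; omega), if_neg (by simp)]

lemma nrm_flip {d : ℕ} (i' j' : Fin d) (m' n' : ℤ)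
    (hb : i' < j' ∨ (i' = j' ∧ m' ≤ n')) :
    nrm j' i' n' m' = ((Finsupp.single (i', j', m', n') 1,
      if i' = j' ∧ m' + n' = 0 ∧ m' < n' then (n' : ℂ) else 0) : LSp d) := by
  rcases hb with h | ⟨rfl, h⟩
  · rw [nrm, if_neg (by simp [h.ne']), if_pos h, if_neg (by simp [h.ne])]
  · rcases lt_or_eq_of_le h with h' | rfl
    · rw [nrm, if_pos ⟨rfl, h'⟩]
      simp [h', add_comm m' n']
    · rw [nrm, if_neg (by simp), if_neg (by simp), if_neg (by simp)]

lemma key {d : ℕ} (r s : ℂ) (k i' j' : Fin d) (l m' n' : ℤ) (hl : l < 0)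
    (hb : i' < j' ∨ (i' = j' ∧ m' ≤ n')) :
    brk r ((-(1 / (l : ℂ))) • nrm k k l (-l)) ((Finsupp.single (i', j', m', n') 1, s) : LSp d)
      = (((if k = i' ∧ l = m' then 1 else 0) + (if k = j' ∧ l = n' then 1 else 0)
          - (if k = i' ∧ -l = m' then 1 else 0) - (if k = j' ∧ -l = n' then 1 else 0) : ℂ))
        • ((Finsupp.single (i', j', m', n') 1, 0) : LSp d) := by
  have hlc : (l : ℂ) ≠ 0 := Int.cast_ne_zero.2 (by omega)
  have hx : nrm k k l (-l) = ((Finsupp.single (k, k, l, -l) 1, 0) : LSp d) :=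
    nrm_id _ _ _ _ (Or.inr ⟨rfl, by omega⟩)
  rw [hx]
  have hbrk : brk r ((-(1 / (l : ℂ))) • ((Finsupp.single (k, k, l, -l) 1, 0) : LSp d))
      ((Finsupp.single (i', j', m', n') 1, s) : LSp d)
      = ((-(1 / (l : ℂ))) * 1) • wick r (k, k, l, -l) (i', j', m', n') := by
    rw [brk]
    have h1 : ((-(1 / (l : ℂ))) • ((Finsupp.single (k, k, l, -l) 1, 0) : LSp d)).1
        = Finsupp.single (k, k, l, -l) (-(1 / (l : ℂ))) := by
      simp [Finsupp.smul_single']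
    rw [h1, Finsupp.sum_single_index (by simp), Finsupp.sum_single_index (by simp)]
  rw [hbrk]
  have T1 : kapC k j' (-l) n' • nrm k i' l m'
      = (if k = j' ∧ l = n' then (-(l : ℂ)) else 0)
        • ((Finsupp.single (i', j', m', n') 1, 0) : LSp d) := by
    by_cases h : k = j' ∧ l = n'
    · obtain ⟨rfl, rfl⟩ := h
      rw [kapC, if_pos ⟨rfl, by omega⟩, if_pos ⟨rfl, rfl⟩,
        nrm_flip i' k m' l hb, if_neg (by rintro ⟨rfl, h1, h2⟩; omega)]
      congr 1
      push_cast
      ring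
    · rw [kapC, if_neg (fun hc => h ⟨hc.1, by omega⟩), if_neg h, zero_smul, zero_smul]
  have T2 : kapC k i' (-l) m' • nrm k j' l n'
      = (if k = i' ∧ l = m' then (-(l : ℂ)) else 0)
        • ((Finsupp.single (i', j', m', n') 1, 0) : LSp d) := by
    by_cases h : k = i' ∧ l = m'
    · obtain ⟨rfl, rfl⟩ := h
      rw [kapC, if_pos ⟨rfl, by omega⟩, if_pos ⟨rfl, rfl⟩, nrm_id k j' l n' hb]
      congr 1
      push_cast
      ring
    · rw [kapC, if_neg (fun hc => h ⟨hc.1, by omega⟩), if_neg h, zero_smul, zero_smul]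
  have T3 : kapC k j' l n' • nrm i' k m' (-l)
      = (if k = j' ∧ -l = n' then ((l : ℂ)) else 0)
        • ((Finsupp.single (i', j', m', n') 1, 0) : LSp d) := by
    by_cases h : k = j' ∧ -l = n'
    · obtain ⟨rfl, rfl⟩ := h
      rw [kapC, if_pos ⟨rfl, by omega⟩, if_pos ⟨rfl, rfl⟩, nrm_id i' k m' (-l) hb]
    · rw [kapC, if_neg (fun hc => h ⟨hc.1, by omega⟩), if_neg h, zero_smul, zero_smul]
  have T4 : kapC k i' l m' • nrm j' k n' (-l)
      = (if k = i' ∧ -l = m' then ((l : ℂ)) else 0)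
        • ((Finsupp.single (i', j', m', n') 1, 0) : LSp d) := by
    by_cases h : k = i' ∧ -l = m'
    · obtain ⟨rfl, rfl⟩ := h
      rw [kapC, if_pos ⟨rfl, by omega⟩, if_pos ⟨rfl, rfl⟩,
        nrm_flip k j' (-l) n' hb, if_neg (by rintro ⟨rfl, h1, h2⟩; omega)]
    · rw [kapC, if_neg (fun hc => h ⟨hc.1, by omega⟩), if_neg h, zero_smul, zero_smul]
  have hw : wick r (k, k, l, -l) (i', j', m', n')
      = (((if k = j' ∧ l = n' then (-(l : ℂ)) else 0)
          + (if k = i' ∧ l = m' then (-(l : ℂ)) else 0)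
          + (if k = j' ∧ -l = n' then ((l : ℂ)) else 0)
          + (if k = i' ∧ -l = m' then ((l : ℂ)) else 0)))
        • ((Finsupp.single (i', j', m', n') 1, 0) : LSp d) := by
    simp only [wick]
    rw [T1, T2, T3, T4,
      show ∀ (a b c e : ℂ) (v : LSp d), a • v + b • v + c • v + e • v = (a + b + c + e) • v
        from fun a b c e v => by module]
    simp [smul_eq_mul]
  rw [hw, smul_smul]
  congr 1
  split_ifs <;> field_simp <;> ring

/-- with the weight operators `h_{k,l} := −(1/l)·v^{kk}(l,−l)` for `l < 0`,
one has, in `L_r`,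
`[h_{k,l}, v^{ij}(m,n)]_r = (δ_{(k,l),(i,m)} + δ_{(k,l),(j,n)} − δ_{(k,−l),(i,m)} − δ_{(k,−l),(j,n)})·v^{ij}(m,n)`. -/
theorem stmt_14 (d : ℕ) (r : ℂ) (k i j : Fin d) (l m n : ℤ) (hl : l < 0) :
    brk r ((-(1 / (l : ℂ))) • nrm k k l (-l)) (nrm i j m n)
      = (((if k = i ∧ l = m then 1 else 0) + (if k = j ∧ l = n then 1 else 0)
          - (if k = i ∧ -l = m then 1 else 0) - (if k = j ∧ -l = n then 1 else 0) : ℂ))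
        • nrm i j m n := by
  by_cases hA : i = j ∧ n < m
  · obtain ⟨rfl, hnm⟩ := hA
    have hy : nrm i i m n
        = ((Finsupp.single (i, i, n, m) 1, if m + n = 0 then (m : ℂ) else 0) : LSp d) := by
      rw [nrm, if_pos ⟨rfl, hnm⟩]
    rw [hy, key r _ k i i l n m hl (Or.inr ⟨rfl, hnm.le⟩)]
    apply Prod.ext
    · show _ • Finsupp.single _ _ = _ • Finsupp.single _ _
      congr 1
      ring
    · show (_ : ℂ) • (0 : ℂ) = _ • _
      by_cases hki : k = i
      · subst hki
        simp only [true_and, smul_eq_mul, mul_zero]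
        split_ifs <;> first | (exfalso; omega) | norm_num
      · simp [hki]
  · by_cases hB : j < i
    · have hy : nrm i j m n = ((Finsupp.single (j, i, n, m) 1, 0) : LSp d) := by
        rw [nrm, if_neg hA, if_pos hB]
      rw [hy, key r 0 k j i l n m hl (Or.inl hB)]
      congr 1
      ring
    · have hor : i < j ∨ (i = j ∧ m ≤ n) := by
        rcases eq_or_lt_of_le (le_of_not_gt hB) with h | h
        · exact Or.inr ⟨h, by by_contra hc; exact hA ⟨h, by omega⟩⟩
        · exact Or.inl h
      rw [nrm_id i j m n hor, key r 0 k i j l m n hl hor]
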